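/- Let a > 0 be a real number and n ≥ 1, and let φ_n be a monic OPUC of degree n for the weight w(θ) := |1 − e^{iθ}|^{2a} on [0, 2π]. Suppose the roots z_1, …, z_n of φ_n are pairwise distinct, and that z_k ≠ 0 and z_k ≠ 1 for every k. Then for every k = 1, …, n: ∑_{j ≠ k} 1/(z_k − z_j) + (a + 1/2)/(z_k − 1) − ((n + a − 1)/2)/z_k = 0. That is, the zeros of φ_n are in equilibrium in the field of a positive charge of magnitude a + 1/2 at z = 1 and a negative charge of magnitude (n + a − 1)/2 at the origin. -/

import Mathlib

open Polynomial Complex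

/-- `φ` is a monic orthogonal polynomial on the unit circle of degree `n`
for the weight `w` on `[0, 2π]`. -/
def IsMonicOPUC (w : ℝ → ℝ) (n : ℕ) (φ : Polynomial ℂ) : Prop :=
  φ.Monic ∧ φ.degree = (n : ℕ) ∧
    ∀ k < n, (∫ θ in (0:ℝ)..(2 * Real.pi),
      φ.eval (Complex.exp (θ * Complex.I)) *
        Complex.exp (-(k : ℂ) * θ * Complex.I) * (w θ : ℂ)) = 0

set_option maxHeartbeats 1000000

noncomputable section OPUCAux

open scoped Real

/-- The weight. -/
def Wt (a θ : ℝ) : ℝ := (2 - 2 * Real.cos θ) ^ a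

lemma Wt_cont (a : ℝ) (ha : 0 < a) : Continuous (Wt a) := by
  apply Continuous.rpow_const (by continuity)
  exact fun x => Or.inr ha.le

lemma base_pos {θ : ℝ} (h : θ ∈ Set.Ioo 0 (2 * π)) : 0 < 2 - 2 * Real.cos θ := by
  have h1 : Real.cos θ ≤ 1 := Real.cos_le_one θ
  have h2 : Real.cos θ ≠ 1 := by
    intro hc
    have := (Real.cos_eq_one_iff_of_lt_of_lt (x := θ) (by nlinarith [h.1, h.2, Real.pi_pos])
      (by nlinarith [h.1, h.2])).1 hc
    exact absurd this (ne_of_gt h.1)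
  have : Real.cos θ < 1 := lt_of_le_of_ne h1 h2
  linarith

lemma Wt_pos (a : ℝ) {θ : ℝ} (h : θ ∈ Set.Ioo 0 (2 * π)) : 0 < Wt a θ :=
  Real.rpow_pos_of_pos (base_pos h) a

lemma Wt_zero (a : ℝ) (ha : 0 < a) : Wt a 0 = 0 := by
  simp [Wt, Real.cos_zero, Real.zero_rpow ha.ne']

lemma Wt_two_pi (a : ℝ) (ha : 0 < a) : Wt a (2 * π) = 0 := by
  simp [Wt, Real.cos_two_pi, Real.zero_rpow ha.ne']

lemma Wt_deriv (a : ℝ) {θ : ℝ} (h : θ ∈ Set.Ioo 0 (2 * π)) :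
    HasDerivAt (Wt a) (a * (2 - 2 * Real.cos θ) ^ (a - 1) * (2 * Real.sin θ)) θ := by
  have hb : HasDerivAt (fun θ : ℝ => 2 - 2 * Real.cos θ) (2 * Real.sin θ) θ := by
    simpa using ((Real.hasDerivAt_cos θ).const_mul 2).const_sub 2
  have h2 := hb.rpow_const (p := a) (Or.inl (ne_of_gt (base_pos h)))
  unfold Wt
  convert h2 using 1
  ring

lemma contE : Continuous fun θ : ℝ => Complex.exp (θ * Complex.I) :=
  Complex.continuous_exp.comp (by continuity)

lemma contExp (c : ℂ) : Continuous fun θ : ℝ => Complex.exp (c * θ * Complex.I) :=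
  Complex.continuous_exp.comp (by continuity)

lemma contWtC (a : ℝ) (ha : 0 < a) : Continuous fun θ : ℝ => ((Wt a θ : ℝ) : ℂ) :=
  Complex.continuous_ofReal.comp (Wt_cont a ha)

lemma E_deriv (θ : ℝ) :
    HasDerivAt (fun θ : ℝ => Complex.exp (θ * Complex.I))
      (Complex.exp (θ * Complex.I) * Complex.I) θ := by
  have h1 : HasDerivAt (fun z : ℂ => Complex.exp (z * Complex.I))
      (Complex.exp ((θ : ℂ) * Complex.I) * Complex.I) (θ : ℂ) :=
    (Complex.hasDerivAt_exp _).comp (θ : ℂ) (hasDerivAt_mul_const Complex.I)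
  exact h1.comp_ofReal

lemma Exp_deriv (c : ℂ) (θ : ℝ) :
    HasDerivAt (fun θ : ℝ => Complex.exp (c * θ * Complex.I))
      (c * Complex.I * Complex.exp (c * θ * Complex.I)) θ := by
  have h2 : HasDerivAt (fun z : ℂ => c * z * Complex.I) (c * Complex.I) (θ : ℂ) := by
    simpa [mul_comm, mul_assoc, mul_left_comm] using
      ((hasDerivAt_id ((θ : ℂ))).const_mul c).mul_const Complex.I
  have h1 : HasDerivAt (fun z : ℂ => Complex.exp (c * z * Complex.I))
      (Complex.exp (c * (θ : ℂ) * Complex.I) * (c * Complex.I)) (θ : ℂ) :=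
    (Complex.hasDerivAt_exp _).comp (θ : ℂ) h2
  simpa [mul_comm] using h1.comp_ofReal

lemma trig_identity (θ : ℝ) :
    ((2 * Real.sin θ : ℝ) : ℂ) * (Complex.exp (θ * Complex.I) - 1) =
      Complex.I * (Complex.exp (θ * Complex.I) + 1) * ((2 - 2 * Real.cos θ : ℝ) : ℂ) := by
  have he : Complex.exp (θ * Complex.I) * Complex.exp (-(θ * Complex.I)) = 1 := by
    rw [← Complex.exp_add]; simp
  have hs : Complex.sin ((θ : ℂ)) =
      (Complex.exp (-((θ:ℂ) * Complex.I)) - Complex.exp ((θ:ℂ) * Complex.I)) * Complex.I / 2 := by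
    rw [Complex.sin]; ring_nf
  have hc : Complex.cos ((θ : ℂ)) =
      (Complex.exp ((θ:ℂ) * Complex.I) + Complex.exp (-((θ:ℂ) * Complex.I))) / 2 := by
    rw [Complex.cos]; ring_nf
  push_cast
  rw [hs, hc]
  linear_combination (2 * Complex.I) * he

lemma pearson (a : ℝ) {θ : ℝ} (h : θ ∈ Set.Ioo 0 (2 * π)) :
    ((a * (2 - 2 * Real.cos θ) ^ (a - 1) * (2 * Real.sin θ) : ℝ) : ℂ) *
        (Complex.exp (θ * Complex.I) - 1) =
      Complex.I * a * (Complex.exp (θ * Complex.I) + 1) * ((Wt a θ : ℝ) : ℂ) := by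
  have hx : (2 - 2 * Real.cos θ) ≠ 0 := (base_pos h).ne'
  have hpow : (2 - 2 * Real.cos θ) ^ (a - 1) * (2 - 2 * Real.cos θ) = Wt a θ := by
    rw [Wt, ← Real.rpow_add_one hx]; ring_nf
  have := trig_identity θ
  calc ((a * (2 - 2 * Real.cos θ) ^ (a - 1) * (2 * Real.sin θ) : ℝ) : ℂ) *
        (Complex.exp (θ * Complex.I) - 1)
      = (a : ℂ) * ((2 - 2 * Real.cos θ) ^ (a - 1) : ℝ) *
          (((2 * Real.sin θ : ℝ) : ℂ) * (Complex.exp (θ * Complex.I) - 1)) := by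
        push_cast; ring
    _ = (a : ℂ) * ((2 - 2 * Real.cos θ) ^ (a - 1) : ℝ) *
          (Complex.I * (Complex.exp (θ * Complex.I) + 1) * ((2 - 2 * Real.cos θ : ℝ) : ℂ)) := by
        rw [this]
    _ = Complex.I * a * (Complex.exp (θ * Complex.I) + 1) *
          ((((2 - 2 * Real.cos θ) ^ (a - 1) * (2 - 2 * Real.cos θ) : ℝ)) : ℂ) := by
        push_cast; ring
    _ = Complex.I * a * (Complex.exp (θ * Complex.I) + 1) * ((Wt a θ : ℝ) : ℂ) := by
        rw [hpow]

/-- The key integral identity, obtained from the fundamental theorem of calculus. -/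
lemma key1 (a : ℝ) (ha : 0 < a) (m : ℂ) (p : Polynomial ℂ) :
    (∫ θ in (0:ℝ)..(2 * π),
      Complex.exp (m * θ * Complex.I) *
        (Complex.exp (θ * Complex.I) * (Complex.exp (θ * Complex.I) - 1) *
            (p.derivative.eval (Complex.exp (θ * Complex.I))) +
          ((m + a + 1) * Complex.exp (θ * Complex.I) + (a - m)) *
            (p.eval (Complex.exp (θ * Complex.I)))) *
        ((Wt a θ : ℝ) : ℂ)) = 0 := by
  set F : ℝ → ℂ := fun θ =>
    p.eval (Complex.exp (θ * Complex.I)) * Complex.exp (m * θ * Complex.I) *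
      (Complex.exp (θ * Complex.I) - 1) * ((Wt a θ : ℝ) : ℂ) with hF
  set G : ℝ → ℂ := fun θ =>
    Complex.exp (m * θ * Complex.I) *
      (Complex.exp (θ * Complex.I) * (Complex.exp (θ * Complex.I) - 1) *
          (p.derivative.eval (Complex.exp (θ * Complex.I))) +
        ((m + a + 1) * Complex.exp (θ * Complex.I) + (a - m)) *
          (p.eval (Complex.exp (θ * Complex.I)))) *
      ((Wt a θ : ℝ) : ℂ) with hG
  have hGc : Continuous G := by
    refine ((contExp m).mul ?_).mul (contWtC a ha)
    exact ((contE.mul (contE.sub continuous_const)).mul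
        ((p.derivative.continuous).comp contE)).add
      (((continuous_const.mul contE).add continuous_const).mul ((p.continuous).comp contE))
  have hFc : Continuous F :=
    ((((p.continuous).comp contE).mul (contExp m)).mul
      (contE.sub continuous_const)).mul (contWtC a ha)
  have hderiv : ∀ θ ∈ Set.Ioo (0:ℝ) (2 * π), HasDerivAt F (Complex.I * G θ) θ := by
    intro θ hθ
    have hp : HasDerivAt (fun θ : ℝ => p.eval (Complex.exp (θ * Complex.I)))
        (p.derivative.eval (Complex.exp (θ * Complex.I)) *
          (Complex.exp (θ * Complex.I) * Complex.I)) θ :=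
      (Polynomial.hasDerivAt p _).comp θ (E_deriv θ)
    have hw : HasDerivAt (fun θ : ℝ => ((Wt a θ : ℝ) : ℂ))
        ((a * (2 - 2 * Real.cos θ) ^ (a - 1) * (2 * Real.sin θ) : ℝ) : ℂ) θ :=
      (Wt_deriv a hθ).ofReal_comp
    have hprod := (((hp.mul (Exp_deriv m θ)).mul ((E_deriv θ).sub_const 1)).mul hw)
    convert hprod using 1
    · rfl
    · rfl
    simp only [Pi.mul_apply]
    have hpear := pearson a hθ
    set e := Complex.exp (θ * Complex.I)
    set em := Complex.exp (m * θ * Complex.I)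
    set w := ((Wt a θ : ℝ) : ℂ)
    set w' := ((a * (2 - 2 * Real.cos θ) ^ (a - 1) * (2 * Real.sin θ) : ℝ) : ℂ)
    set pe := p.eval e
    set pe' := p.derivative.eval e
    linear_combination (-(pe * em)) * hpear
  have h2pi : (0:ℝ) ≤ 2 * π := by positivity
  have hFTC := intervalIntegral.integral_eq_sub_of_hasDeriv_right_of_le h2pi
    hFc.continuousOn (fun θ hθ => (hderiv θ hθ).hasDerivWithinAt)
    ((continuous_const.mul hGc).intervalIntegrable 0 (2 * π))
  have hF0 : F 0 = 0 := by simp [hF, Wt_zero a ha]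
  have hF2pi : F (2 * π) = 0 := by simp [hF, Wt_two_pi a ha]
  rw [hF2pi, hF0, sub_zero] at hFTC
  have : Complex.I * ∫ θ in (0:ℝ)..(2 * π), G θ = 0 := by
    rw [← intervalIntegral.integral_const_mul]; exact hFTC
  rcases mul_eq_zero.1 this with h | h
  · exact absurd h Complex.I_ne_zero
  · exact h

/-- The auxiliary polynomial `ψ`. -/
def psi (a : ℝ) (n : ℕ) (φ : Polynomial ℂ) : Polynomial ℂ :=
  (derivative (derivative φ)) * X ^ 2 - (derivative (derivative φ)) * X +
    C ((a : ℂ) - n + 2) * (derivative φ * X) + C ((n : ℂ) + a - 1) * derivative φ -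
    C ((n : ℂ) * (a + 1)) * φ

lemma psi_eval (a : ℝ) (n : ℕ) (φ : Polynomial ℂ) (x : ℂ) :
    (psi a n φ).eval x =
      x * (x - 1) * (derivative (derivative φ)).eval x +
        (((a : ℂ) - n + 2) * x + ((n : ℂ) + a - 1)) * (derivative φ).eval x -
        ((n : ℂ) * (a + 1)) * φ.eval x := by
  simp [psi]; ring

lemma key2 (a : ℝ) (ha : 0 < a) (n : ℕ) (φ : Polynomial ℂ)
    (horth : ∀ k < n, (∫ θ in (0:ℝ)..(2 * π),
      φ.eval (Complex.exp (θ * Complex.I)) * Complex.exp (-(k : ℂ) * θ * Complex.I) *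
        ((Wt a θ : ℝ) : ℂ)) = 0)
    (k : ℕ) (hk : k < n) :
    (∫ θ in (0:ℝ)..(2 * π),
      Complex.exp (-(k : ℂ) * θ * Complex.I) *
        (psi a n φ).eval (Complex.exp (θ * Complex.I)) * ((Wt a θ : ℝ) : ℂ)) = 0 := by
  set c : ℂ := (n : ℂ) - 1 - (k : ℂ) with hc
  set d1 : ℂ := c * ((a : ℂ) - k) - (n : ℂ) * ((a : ℂ) + 1) with hd1
  set d2 : ℂ := c * ((a : ℂ) + k + 1) with hd2
  set Af : ℝ → ℂ := fun θ =>
    Complex.exp (-(k : ℂ) * θ * Complex.I) *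
      (Complex.exp (θ * Complex.I) * (Complex.exp (θ * Complex.I) - 1) *
          ((derivative φ).derivative.eval (Complex.exp (θ * Complex.I))) +
        ((-(k : ℂ) + a + 1) * Complex.exp (θ * Complex.I) + ((a : ℂ) - -(k : ℂ))) *
          ((derivative φ).eval (Complex.exp (θ * Complex.I)))) *
      ((Wt a θ : ℝ) : ℂ) with hAf
  set Bf : ℝ → ℂ := fun θ =>
    Complex.exp ((-(k : ℂ) - 1) * θ * Complex.I) *
      (Complex.exp (θ * Complex.I) * (Complex.exp (θ * Complex.I) - 1) *
          ((derivative φ).eval (Complex.exp (θ * Complex.I))) +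
        (((-(k : ℂ) - 1) + a + 1) * Complex.exp (θ * Complex.I) + ((a : ℂ) - (-(k : ℂ) - 1))) *
          (φ.eval (Complex.exp (θ * Complex.I)))) *
      ((Wt a θ : ℝ) : ℂ) with hBf
  set C1f : ℝ → ℂ := fun θ =>
    φ.eval (Complex.exp (θ * Complex.I)) * Complex.exp (-(k : ℂ) * θ * Complex.I) *
      ((Wt a θ : ℝ) : ℂ) with hC1f
  set Ck1f : ℝ → ℂ := fun θ =>
    φ.eval (Complex.exp (θ * Complex.I)) * Complex.exp ((-(k : ℂ) - 1) * θ * Complex.I) *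
      ((Wt a θ : ℝ) : ℂ) with hCk1f
  have hA : (∫ θ in (0:ℝ)..(2 * π), Af θ) = 0 := key1 a ha (-(k : ℂ)) (derivative φ)
  have hB : (∫ θ in (0:ℝ)..(2 * π), Bf θ) = 0 := key1 a ha (-(k : ℂ) - 1) φ
  have hC1 : (∫ θ in (0:ℝ)..(2 * π), C1f θ) = 0 := horth k hk
  have hsplit : ∀ θ : ℝ,
      Complex.exp (-(k : ℂ) * θ * Complex.I) *
        (psi a n φ).eval (Complex.exp (θ * Complex.I)) * ((Wt a θ : ℝ) : ℂ) =
      Af θ - c * Bf θ + d1 * C1f θ + d2 * Ck1f θ := by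
    intro θ
    have he : Complex.exp ((-(k : ℂ) - 1) * θ * Complex.I) * Complex.exp (θ * Complex.I) =
        Complex.exp (-(k : ℂ) * θ * Complex.I) := by
      rw [← Complex.exp_add]; congr 1; ring
    simp only [hAf, hBf, hC1f, hCk1f, hd1, hd2, hc]
    rw [psi_eval, ← he]
    push_cast
    ring
  have hcont : ∀ (q : Polynomial ℂ) (c₀ c₁ c₂ : ℂ), Continuous fun θ : ℝ =>
      Complex.exp (c₀ * θ * Complex.I) *
        (Complex.exp (θ * Complex.I) * (Complex.exp (θ * Complex.I) - 1) *
            ((derivative q).eval (Complex.exp (θ * Complex.I))) +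
          (c₁ * Complex.exp (θ * Complex.I) + c₂) * (q.eval (Complex.exp (θ * Complex.I)))) *
        ((Wt a θ : ℝ) : ℂ) := by
    intro q c₀ c₁ c₂
    refine ((contExp c₀).mul ?_).mul (contWtC a ha)
    exact ((contE.mul (contE.sub continuous_const)).mul
        (((derivative q).continuous).comp contE)).add
      (((continuous_const.mul contE).add continuous_const).mul ((q.continuous).comp contE))
  have hcontC : ∀ (c₀ : ℂ), Continuous fun θ : ℝ =>
      φ.eval (Complex.exp (θ * Complex.I)) * Complex.exp (c₀ * θ * Complex.I) *
        ((Wt a θ : ℝ) : ℂ) := fun c₀ =>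
    (((φ.continuous).comp contE).mul (contExp c₀)).mul (contWtC a ha)
  have iA : IntervalIntegrable Af MeasureTheory.volume 0 (2 * π) :=
    (hcont (derivative φ) (-(k : ℂ)) _ _).intervalIntegrable _ _
  have iB : IntervalIntegrable Bf MeasureTheory.volume 0 (2 * π) :=
    (hcont φ (-(k : ℂ) - 1) _ _).intervalIntegrable _ _
  have iC1 : IntervalIntegrable C1f MeasureTheory.volume 0 (2 * π) :=
    (hcontC (-(k : ℂ))).intervalIntegrable _ _
  have iCk1 : IntervalIntegrable Ck1f MeasureTheory.volume 0 (2 * π) :=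
    (hcontC (-(k : ℂ) - 1)).intervalIntegrable _ _
  have hJ : d2 * (∫ θ in (0:ℝ)..(2 * π), Ck1f θ) = 0 := by
    rcases Nat.lt_or_ge (k + 1) n with hlt | hge
    · have h2 := horth (k + 1) hlt
      have h3 : (∫ θ in (0:ℝ)..(2 * π), Ck1f θ) = 0 := by
        rw [← h2]
        refine intervalIntegral.integral_congr (fun θ _ => ?_)
        simp only [hCk1f]
        congr 2
        push_cast
        ring
      rw [h3, mul_zero]
    · have hkn : (k : ℂ) = (n : ℂ) - 1 := by
        have h4 : k + 1 = n := le_antisymm hk hge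
        rw [← h4]; push_cast; ring
      have h5 : d2 = 0 := by rw [hd2, hc, hkn]; ring
      rw [h5, zero_mul]
  rw [intervalIntegral.integral_congr (g := fun θ => Af θ - c * Bf θ + d1 * C1f θ + d2 * Ck1f θ)
      (fun θ _ => hsplit θ),
    intervalIntegral.integral_add ((iA.sub (iB.const_mul c)).add (iC1.const_mul d1))
      (iCk1.const_mul d2),
    intervalIntegral.integral_add (iA.sub (iB.const_mul c)) (iC1.const_mul d1),
    intervalIntegral.integral_sub iA (iB.const_mul c),
    intervalIntegral.integral_const_mul, intervalIntegral.integral_const_mul,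
    intervalIntegral.integral_const_mul, hA, hB, hC1, hJ]
  ring

lemma key3 (a : ℝ) (n : ℕ) (φ : Polynomial ℂ) (hm : φ.Monic) (hd : φ.natDegree = n)
    (hn : 1 ≤ n) (hne : psi a n φ ≠ 0) : (psi a n φ).natDegree < n := by
  rw [Polynomial.natDegree_lt_iff_degree_lt hne, Polynomial.degree_lt_iff_coeff_zero]
  intro j hj
  have hj' : n ≤ j := by exact_mod_cast hj
  have hc1 : φ.coeff n = 1 := by rw [← hd]; exact hm.coeff_natDegree
  have hφj : ∀ l, n < l → φ.coeff l = 0 := fun l hl =>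
    Polynomial.coeff_eq_zero_of_natDegree_lt (by omega)
  have e1 : psi a n φ = derivative (derivative φ) * X ^ 2 - derivative (derivative φ) * X ^ 1 +
      C ((a : ℂ) - n + 2) * (derivative φ * X ^ 1) + C ((n : ℂ) + a - 1) * derivative φ -
      C ((n : ℂ) * (a + 1)) * φ := by simp only [psi, pow_one]
  rw [e1]
  simp only [Polynomial.coeff_sub, Polynomial.coeff_add, Polynomial.coeff_C_mul,
    Polynomial.coeff_mul_X_pow']
  rcases lt_or_eq_of_le hj' with hlt | heq
  · have z1 : φ.coeff j = 0 := hφj j hlt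
    have z2 : (derivative φ).coeff j = 0 := by
      rw [Polynomial.coeff_derivative, hφj (j + 1) (by omega), zero_mul]
    have z3 : (derivative φ).coeff (j - 1) = 0 := by
      rw [Polynomial.coeff_derivative, show j - 1 + 1 = j from by omega, hφj j hlt, zero_mul]
    have z4 : (derivative (derivative φ)).coeff (j - 1) = 0 := by
      rw [Polynomial.coeff_derivative, show j - 1 + 1 = j from by omega, z2, zero_mul]
    have z5 : (derivative (derivative φ)).coeff (j - 2) = 0 := by
      rw [Polynomial.coeff_derivative, show j - 2 + 1 = j - 1 from by omega, z3, zero_mul]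
    rw [z1, z2, z3, z4, z5]
    split_ifs <;> ring
  · subst heq
    obtain ⟨m, rfl⟩ : ∃ m, n = m + 1 := ⟨n - 1, by omega⟩
    cases m with
    | zero =>
      have z2 : (derivative φ).coeff 1 = 0 := by
        rw [Polynomial.coeff_derivative, hφj 2 (by omega), zero_mul]
      have z0 : (derivative φ).coeff 0 = 1 := by
        rw [Polynomial.coeff_derivative, hc1]
        norm_num
      have z4 : (derivative (derivative φ)).coeff 0 = 0 := by
        rw [Polynomial.coeff_derivative, z2, zero_mul]
      rw [if_neg (by omega), if_pos (by omega), if_pos (by omega)]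
      simp only [Nat.sub_self, z4, z0, z2, hc1]
      push_cast
      ring
    | succ m' =>
      have hq1 : (derivative φ).coeff (m' + 1) = ((m' : ℂ) + 2) := by
        rw [Polynomial.coeff_derivative, show m' + 1 + 1 = m' + 2 from rfl, hc1]
        push_cast
        ring
      have hq2 : (derivative φ).coeff (m' + 2) = 0 := by
        rw [Polynomial.coeff_derivative, hφj (m' + 3) (by omega), zero_mul]
      have hr1 : (derivative (derivative φ)).coeff m' = ((m' : ℂ) + 2) * ((m' : ℂ) + 1) := by
        rw [Polynomial.coeff_derivative, hq1]
      have hr2 : (derivative (derivative φ)).coeff (m' + 1) = 0 := by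
        rw [Polynomial.coeff_derivative, hq2, zero_mul]
      rw [if_pos (by omega), if_pos (by omega), if_pos (by omega),
        show m' + 1 + 1 - 2 = m' from by omega, show m' + 1 + 1 - 1 = m' + 1 from by omega,
        hr1, hq1, hq2, hc1, hr2]
      push_cast
      ring_nf

lemma key4 (a : ℝ) (ha : 0 < a) (n : ℕ) (hn : 1 ≤ n) (φ : Polynomial ℂ)
    (hm : φ.Monic) (hd : φ.natDegree = n)
    (horth : ∀ k < n, (∫ θ in (0:ℝ)..(2 * π),
      φ.eval (Complex.exp (θ * Complex.I)) * Complex.exp (-(k : ℂ) * θ * Complex.I) *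
        ((Wt a θ : ℝ) : ℂ)) = 0) :
    psi a n φ = 0 := by
  by_cases hne : psi a n φ = 0
  · exact hne
  have hlt : (psi a n φ).natDegree < n := key3 a n φ hm hd hn hne
  have hψorth : ∀ k < n, (∫ θ in (0:ℝ)..(2 * π),
      Complex.exp (-(k : ℂ) * θ * Complex.I) *
        (psi a n φ).eval (Complex.exp (θ * Complex.I)) * ((Wt a θ : ℝ) : ℂ)) = 0 :=
    fun k hk => key2 a ha n φ horth k hk
  set g : ℝ → ℝ := fun θ =>
    Complex.normSq ((psi a n φ).eval (Complex.exp (θ * Complex.I))) * Wt a θ with hg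
  have hgc : Continuous g :=
    (Complex.continuous_normSq.comp (((psi a n φ).continuous).comp contE)).mul (Wt_cont a ha)
  have hgnonneg : ∀ θ, 0 ≤ g θ := by
    intro θ
    apply mul_nonneg (Complex.normSq_nonneg _)
    apply Real.rpow_nonneg
    have := Real.cos_le_one θ
    linarith
  have hconj : ∀ θ : ℝ, (starRingEnd ℂ) ((psi a n φ).eval (Complex.exp (θ * Complex.I))) =
      ∑ j ∈ Finset.range n, (starRingEnd ℂ) ((psi a n φ).coeff j) *
        Complex.exp (-(j : ℂ) * θ * Complex.I) := by
    intro θ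
    rw [Polynomial.eval_eq_sum_range' hlt, map_sum]
    refine Finset.sum_congr rfl (fun j _ => ?_)
    rw [map_mul, map_pow]
    congr 1
    rw [← Complex.exp_conj, ← Complex.exp_nat_mul]
    congr 1
    rw [map_mul, Complex.conj_I, Complex.conj_ofReal]
    ring
  have hptwise : ∀ θ : ℝ, ((g θ : ℝ) : ℂ) =
      ∑ j ∈ Finset.range n, (starRingEnd ℂ) ((psi a n φ).coeff j) *
        (Complex.exp (-(j : ℂ) * θ * Complex.I) *
          (psi a n φ).eval (Complex.exp (θ * Complex.I)) * ((Wt a θ : ℝ) : ℂ)) := by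
    intro θ
    rw [hg]
    push_cast
    rw [← Complex.mul_conj, hconj θ, Finset.mul_sum, Finset.sum_mul]
    exact Finset.sum_congr rfl (fun j _ => by ring)
  have hint0 : (∫ θ in (0:ℝ)..(2 * π), ((g θ : ℝ) : ℂ)) = 0 := by
    rw [intervalIntegral.integral_congr
      (g := fun θ => ∑ j ∈ Finset.range n, (starRingEnd ℂ) ((psi a n φ).coeff j) *
        (Complex.exp (-(j : ℂ) * θ * Complex.I) *
          (psi a n φ).eval (Complex.exp (θ * Complex.I)) * ((Wt a θ : ℝ) : ℂ)))
      (fun θ _ => hptwise θ)]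
    have hcont2 : ∀ j : ℕ, Continuous fun θ : ℝ =>
        (starRingEnd ℂ) ((psi a n φ).coeff j) *
          (Complex.exp (-(j : ℂ) * θ * Complex.I) *
            (psi a n φ).eval (Complex.exp (θ * Complex.I)) * ((Wt a θ : ℝ) : ℂ)) := fun j =>
      continuous_const.mul (((contExp (-(j : ℂ))).mul
        (((psi a n φ).continuous).comp contE)).mul (contWtC a ha))
    rw [intervalIntegral.integral_finset_sum (fun j _ => (hcont2 j).intervalIntegrable 0 (2 * π))]
    refine Finset.sum_eq_zero (fun j hj => ?_)
    rw [intervalIntegral.integral_const_mul, hψorth j (Finset.mem_range.1 hj), mul_zero]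
  have hgreal : (∫ θ in (0:ℝ)..(2 * π), g θ) = 0 := by
    rw [intervalIntegral.integral_ofReal] at hint0
    exact_mod_cast hint0
  have h2pi : (0:ℝ) ≤ 2 * π := by positivity
  have hae : g =ᵐ[MeasureTheory.volume.restrict (Set.Ioc 0 (2 * π))] 0 :=
    (intervalIntegral.integral_eq_zero_iff_of_le_of_nonneg_ae h2pi
      (Filter.Eventually.of_forall hgnonneg) (hgc.intervalIntegrable _ _)).1 hgreal
  have hvanish : ∀ θ ∈ Set.Ioo (0:ℝ) (2 * π),
      (psi a n φ).eval (Complex.exp (θ * Complex.I)) = 0 := by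
    intro θ0 hθ0
    by_contra hne0
    have hgpos : 0 < g θ0 := mul_pos (Complex.normSq_pos.2 hne0) (Wt_pos a hθ0)
    have hUopen : IsOpen ({θ : ℝ | g θ ≠ 0} ∩ Set.Ioo 0 (2 * π)) := by
      refine IsOpen.inter ?_ isOpen_Ioo
      exact isOpen_compl_singleton.preimage hgc
    have hpos : 0 < MeasureTheory.volume ({θ : ℝ | g θ ≠ 0} ∩ Set.Ioo 0 (2 * π)) :=
      hUopen.measure_pos _ ⟨θ0, ne_of_gt hgpos, hθ0⟩
    have h1 := MeasureTheory.ae_iff.1 hae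
    rw [MeasureTheory.Measure.restrict_apply' measurableSet_Ioc] at h1
    have hzero : MeasureTheory.volume ({θ : ℝ | g θ ≠ 0} ∩ Set.Ioo 0 (2 * π)) = 0 := by
      refine MeasureTheory.measure_mono_null (fun x hx => ?_) h1
      exact ⟨hx.1, Set.Ioo_subset_Ioc_self hx.2⟩
    exact absurd hzero hpos.ne'
  have hπ2 : (0:ℝ) < 2 * π := by positivity
  have hinj : Set.InjOn (fun θ : ℝ => Complex.exp (θ * Complex.I)) (Set.Ioo 0 (2 * π)) := by
    intro x hx y hy hxy
    rcases Complex.exp_eq_exp_iff_exists_int.1 hxy with ⟨t, ht⟩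
    have h2 : (x : ℂ) * Complex.I = ((y : ℝ) + t * (2 * π) : ℝ) * Complex.I := by
      rw [ht]; push_cast; ring
    have hxr : x = y + t * (2 * π) := by
      exact_mod_cast Complex.ofReal_inj.1 (mul_right_cancel₀ Complex.I_ne_zero h2)
    have hπ := Real.pi_pos
    have ht0 : t = 0 := by
      have l1 : (-1 : ℝ) < t := by nlinarith [hx.1, hx.2, hy.1, hy.2]
      have l2 : (t : ℝ) < 1 := by nlinarith [hx.1, hx.2, hy.1, hy.2]
      have l1' : (-1 : ℤ) < t := by exact_mod_cast l1
      have l2' : t < (1 : ℤ) := by exact_mod_cast l2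
      omega
    rw [ht0] at hxr
    simpa using hxr
  have hroots_inf : {x : ℂ | (psi a n φ).IsRoot x}.Infinite := by
    refine Set.Infinite.mono ?_
      ((Set.Ioo_infinite hπ2).image hinj)
    rintro x ⟨θ, hθ, rfl⟩
    exact hvanish θ hθ
  exact absurd (Polynomial.eq_zero_of_infinite_isRoot _ hroots_inf) hne

lemma deriv_prod {ι : Type*} [DecidableEq ι] (s : Finset ι) (v : ι → ℂ) :
    derivative (∏ j ∈ s, (X - C (v j))) = ∑ i ∈ s, ∏ j ∈ s.erase i, (X - C (v j)) := by
  induction s using Finset.induction_on with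
  | empty => simp
  | @insert b s hb ih =>
    rw [Finset.prod_insert hb, derivative_mul, derivative_X_sub_C, one_mul, ih,
      Finset.mul_sum, Finset.sum_insert hb, Finset.erase_insert hb]
    congr 1
    refine Finset.sum_congr rfl (fun i hi => ?_)
    rw [Finset.erase_insert_of_ne (fun h => hb (by rw [h]; exact hi)), Finset.prod_insert
      (fun h => hb (Finset.mem_of_mem_erase h))]

end OPUCAux

theorem opuc_zeros_equilibrium_one_singularity
    (a : ℝ) (ha : 0 < a) (n : ℕ) (hn : 1 ≤ n)
    (φ : Polynomial ℂ)
    (hφ : IsMonicOPUC (fun θ => (2 - 2 * Real.cos θ) ^ a) n φ)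
    (z : Fin n → ℂ) (hzinj : Function.Injective z)
    (hroots : φ = ∏ j, (Polynomial.X - Polynomial.C (z j)))
    (hz0 : ∀ k, z k ≠ 0) (hz1 : ∀ k, z k ≠ 1) :
    ∀ k, (∑ j ∈ Finset.univ.erase k, 1 / (z k - z j)) +
      ((a : ℂ) + 1 / 2) / (z k - 1) -
      (((n : ℂ) + (a : ℂ) - 1) / 2) / z k = 0 := by
  intro k
  obtain ⟨hm, hdeg, horth0⟩ := hφ
  have hd : φ.natDegree = n := Polynomial.natDegree_eq_of_degree_eq_some hdeg
  have horth : ∀ j < n, (∫ θ in (0:ℝ)..(2 * Real.pi),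
      φ.eval (Complex.exp (θ * Complex.I)) * Complex.exp (-(j : ℂ) * θ * Complex.I) *
        ((Wt a θ : ℝ) : ℂ)) = 0 := by
    intro j hj
    have h := horth0 j hj
    simpa [Wt] using h
  have hψ0 : psi a n φ = 0 := key4 a ha n hn φ hm hd horth
  have hφd : derivative φ = ∑ i : Fin n, ∏ j ∈ Finset.univ.erase i, (X - C (z j)) := by
    rw [hroots, deriv_prod]
  have hφdd : derivative (derivative φ) =
      ∑ i : Fin n, ∑ l ∈ Finset.univ.erase i,
        ∏ j ∈ (Finset.univ.erase i).erase l, (X - C (z j)) := by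
    rw [hφd, Polynomial.derivative_sum]
    exact Finset.sum_congr rfl (fun i _ => deriv_prod _ z)
  set D := ∏ j ∈ Finset.univ.erase k, (z k - z j) with hD
  have hDval : (derivative φ).eval (z k) = D := by
    rw [hφd, Polynomial.eval_finset_sum, Finset.sum_eq_single k]
    · rw [Polynomial.eval_prod]
      simp [hD]
    · intro i _ hik
      rw [Polynomial.eval_prod]
      refine Finset.prod_eq_zero (Finset.mem_erase.2 ⟨Ne.symm hik, Finset.mem_univ k⟩) ?_
      simp
    · intro hk
      exact absurd (Finset.mem_univ k) hk
  have hT : (derivative (derivative φ)).eval (z k) =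
      2 * ∑ l ∈ Finset.univ.erase k, ∏ j ∈ (Finset.univ.erase k).erase l, (z k - z j) := by
    rw [hφdd, Polynomial.eval_finset_sum]
    have hinner : ∀ i : Fin n,
        (∑ l ∈ Finset.univ.erase i, ∏ j ∈ (Finset.univ.erase i).erase l,
          (X - C (z j))).eval (z k)
        = ∑ l ∈ Finset.univ.erase i, ∏ j ∈ (Finset.univ.erase i).erase l, (z k - z j) := by
      intro i
      rw [Polynomial.eval_finset_sum]
      refine Finset.sum_congr rfl (fun l _ => ?_)
      rw [Polynomial.eval_prod]
      exact Finset.prod_congr rfl (fun j _ => by simp)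
    simp only [hinner]
    rw [← Finset.sum_erase_add Finset.univ _ (Finset.mem_univ k)]
    have houter : ∀ i ∈ Finset.univ.erase k,
        (∑ l ∈ Finset.univ.erase i, ∏ j ∈ (Finset.univ.erase i).erase l, (z k - z j))
        = ∏ j ∈ (Finset.univ.erase k).erase i, (z k - z j) := by
      intro i hi
      have hik : i ≠ k := (Finset.mem_erase.1 hi).1
      rw [Finset.sum_eq_single_of_mem k
        (Finset.mem_erase.2 ⟨Ne.symm hik, Finset.mem_univ k⟩)]
      · rw [Finset.erase_right_comm]
      · intro l hl hlk
        refine Finset.prod_eq_zero (Finset.mem_erase.2 ⟨Ne.symm hlk, Finset.mem_erase.2 ⟨Ne.symm hik, Finset.mem_univ k⟩⟩) ?_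
        exact sub_self (z k)
    rw [Finset.sum_congr rfl houter]
    ring
  have hDne : D ≠ 0 := by
    rw [hD]
    refine Finset.prod_ne_zero_iff.2 (fun j hj => ?_)
    exact sub_ne_zero.2 (fun h => (Finset.mem_erase.1 hj).1 (hzinj h).symm)
  have hφzk : φ.eval (z k) = 0 := by
    rw [hroots, Polynomial.eval_prod]
    exact Finset.prod_eq_zero (Finset.mem_univ k) (by simp)
  have h0 : (psi a n φ).eval (z k) = 0 := by rw [hψ0, Polynomial.eval_zero]
  rw [psi_eval, hT, hDval, hφzk] at h0
  set S := ∑ j ∈ Finset.univ.erase k, 1 / (z k - z j) with hS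
  have hSD : S * D =
      ∑ l ∈ Finset.univ.erase k, ∏ j ∈ (Finset.univ.erase k).erase l, (z k - z j) := by
    rw [hS, hD, Finset.sum_mul]
    refine Finset.sum_congr rfl (fun l hl => ?_)
    have hlk : z k - z l ≠ 0 :=
      sub_ne_zero.2 (fun h => (Finset.mem_erase.1 hl).1 (hzinj h).symm)
    rw [← Finset.mul_prod_erase _ _ hl, one_div, inv_mul_cancel_left₀ hlk]
  rw [← hSD] at h0
  have hkey : 2 * z k * (z k - 1) * S + (((a : ℂ) - n + 2) * z k + ((n : ℂ) + a - 1)) = 0 := by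
    have hfac : (2 * z k * (z k - 1) * S +
        (((a : ℂ) - n + 2) * z k + ((n : ℂ) + a - 1))) * D = 0 := by
      linear_combination h0
    rcases mul_eq_zero.1 hfac with h | h
    · exact h
    · exact absurd h hDne
  have hz1' : z k - 1 ≠ 0 := sub_ne_zero.2 (hz1 k)
  have hz0' : z k ≠ 0 := hz0 k
  have expand : S + ((a : ℂ) + 1 / 2) / (z k - 1) - (((n : ℂ) + (a : ℂ) - 1) / 2) / z k =
      (2 * z k * (z k - 1) * S + (((a : ℂ) - n + 2) * z k + ((n : ℂ) + a - 1))) /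
        (2 * z k * (z k - 1)) := by
    field_simp
    ring
  rw [expand, hkey, zero_div]
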